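/- Let v be an aperiodic infinite binary word such that liminf_{ℓ→∞} h(ℓ)/ℓ > log 2 / log 3. Then the series Φ_ℝ(v) = −∑_{i=0}^∞ 2^{d_i}/3^{i+1} converges and its sum is strictly less than −1. -/

import Mathlib

/-- An infinite binary word is eventually periodic if for some period `p ≥ 1`
its digits satisfy `v (n+p) = v n` from some index on. -/
def EventuallyPeriodicWord (v : ℕ → Bool) : Prop :=
  ∃ p : ℕ, 0 < p ∧ ∃ N : ℕ, ∀ n ≥ N, v (n + p) = v n

/-- The position of the `i`-th `1` (0-indexed) of the infinite binary word `v`. -/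
noncomputable def onePos (v : ℕ → Bool) (i : ℕ) : ℕ :=
  Nat.nth (fun n => v n = true) i

/-- The `m`-th partial sum of the series `Φ_ℝ(v) = −∑_{i} 2^{d_i}/3^{i+1}`,
where `d_i` enumerates the positions of the `1`s of `v`. -/
noncomputable def phiPartial (v : ℕ → Bool) (m : ℕ) : ℝ :=
  -∑ i ∈ Finset.range m, (2 : ℝ) ^ onePos v i / 3 ^ (i + 1)

/-- The number of `1`s among the first `ℓ` digits of the infinite binary word `v`. -/
def heightOfPrefix (v : ℕ → Bool) (ℓ : ℕ) : ℕ :=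
  ((Finset.range ℓ).filter fun k => v k = true).card

open Filter

/-- If `v` is aperiodic with `liminf h(ℓ)/ℓ > log 2 / log 3`, then the series
`Φ_ℝ(v)` converges and its sum is strictly less than `−1`. -/
theorem stmt11 (v : ℕ → Bool) (hv : ¬ EventuallyPeriodicWord v)
    (hlim : Real.log 2 / Real.log 3 <
      liminf (fun ℓ : ℕ => (heightOfPrefix v ℓ : ℝ) / ℓ) atTop) :
    ∃ ζ : ℝ, Tendsto (phiPartial v) atTop (nhds ζ) ∧ ζ < -1 := by
  classical
  -- the set of ones is infinite
  have hinf : {n | v n = true}.Infinite := by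
    by_contra hfin
    rw [Set.not_infinite] at hfin
    obtain ⟨N, hN⟩ := hfin.bddAbove
    refine hv ⟨1, one_pos, N + 1, fun n hn => ?_⟩
    have h1 : v n = false := by
      by_contra h
      exact absurd (hN (show v n = true by simpa using h)) (by omega)
    have h2 : v (n + 1) = false := by
      by_contra h
      exact absurd (hN (show v (n+1) = true by simpa using h)) (by omega)
    rw [h1, h2]
  set d := onePos v with hd
  have hd_mono : StrictMono d := Nat.nth_strictMono hinf
  have hd_ge : ∀ i, i ≤ d i := fun i => hd_mono.le_apply
  have hd_mem : ∀ i, v (d i) = true := fun i => Nat.nth_mem_of_infinite hinf i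
  have hcount : ∀ ℓ, heightOfPrefix v ℓ = Nat.count (fun n => v n = true) ℓ := by
    intro ℓ; rw [heightOfPrefix, Nat.count_eq_card_filter_range]
  have hcd : ∀ i, heightOfPrefix v (d i + 1) = i + 1 := by
    intro i
    rw [hcount, Nat.count_succ, if_pos (hd_mem i),
      show d i = Nat.nth (fun n => v n = true) i from rfl,
      Nat.count_nth (fun hf => absurd hf (by simpa using hinf))]
  -- pick c strictly between
  obtain ⟨c, hc1, hc2⟩ := exists_between hlim
  have hlog2 : (0:ℝ) < Real.log 2 := Real.log_pos one_lt_two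
  have hlog3 : (0:ℝ) < Real.log 3 := Real.log_pos (by norm_num)
  have hc0 : 0 < c := lt_of_le_of_lt (div_nonneg hlog2.le hlog3.le) hc1
  have hbdd : IsBoundedUnder (· ≥ ·) atTop (fun ℓ : ℕ => (heightOfPrefix v ℓ : ℝ) / ℓ) :=
    isBoundedUnder_of ⟨0, fun ℓ => div_nonneg (Nat.cast_nonneg _) (Nat.cast_nonneg _)⟩
  have hev : ∀ᶠ ℓ in atTop, c < (heightOfPrefix v ℓ : ℝ) / ℓ :=
    eventually_lt_of_lt_liminf hc2 hbdd
  obtain ⟨N, hN⟩ := eventually_atTop.mp hev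
  -- geometric ratio
  set r : ℝ := (2 : ℝ) ^ (1 / c) / 3 with hr
  have h2r : (0:ℝ) < (2 : ℝ) ^ (1 / c) := Real.rpow_pos_of_pos two_pos _
  have hr0 : 0 ≤ r := by positivity
  have hr1 : r < 1 := by
    rw [hr, div_lt_one (by norm_num : (0:ℝ) < 3)]
    have h3 : (3:ℝ) = (2:ℝ) ^ (Real.logb 2 3) :=
      (Real.rpow_logb two_pos (by norm_num) (by norm_num)).symm
    rw [h3, Real.rpow_lt_rpow_left_iff one_lt_two, Real.logb, div_lt_div_iff₀ hc0 hlog2]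
    rw [div_lt_iff₀ hlog3] at hc1
    linarith
  set f : ℕ → ℝ := fun i => (2 : ℝ) ^ d i / 3 ^ (i + 1) with hf
  have hfpos : ∀ i, 0 < f i := fun i => by positivity
  -- key bound
  have hbound : ∀ i, N ≤ i → f i ≤ r ^ (i + 1) := by
    intro i hi
    have hdi : N ≤ d i + 1 := le_trans (le_trans hi (hd_ge i)) (Nat.le_succ _)
    have h1 := hN (d i + 1) hdi
    rw [hcd i] at h1
    have hdpos : (0:ℝ) < (d i + 1 : ℕ) := by positivity
    rw [lt_div_iff₀ hdpos] at h1
    have h2 : ((d i : ℝ) + 1) ≤ (i + 1 : ℝ) / c := by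
      rw [le_div_iff₀ hc0]
      push_cast at h1 ⊢
      linarith
    have h3 : (2:ℝ) ^ d i ≤ (2:ℝ) ^ ((i + 1 : ℝ) / c) := by
      rw [← Real.rpow_natCast 2 (d i)]
      apply Real.rpow_le_rpow_left_iff one_lt_two |>.mpr
      have : (d i : ℝ) ≤ (d i : ℝ) + 1 := by linarith
      linarith
    have h4 : (2:ℝ) ^ ((i + 1 : ℝ) / c) = ((2:ℝ) ^ (1/c)) ^ (i + 1) := by
      rw [← Real.rpow_natCast ((2:ℝ) ^ (1/c)) (i+1), ← Real.rpow_mul (by norm_num)]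
      congr 1
      push_cast
      ring
    rw [hf, hr]
    rw [div_pow]
    apply div_le_div₀ (by positivity) (h3.trans (le_of_eq h4)) (by positivity)
    exact le_of_eq (by norm_num)
  -- summability
  have hsum : Summable f := by
    rw [← summable_nat_add_iff N]
    have hsg : Summable (fun i : ℕ => r ^ (i + N + 1)) := by
      have h5 : Summable (fun i : ℕ => r ^ (N + 1) * r ^ i) :=
        (summable_geometric_of_lt_one hr0 hr1).mul_left _
      apply h5.congr
      intro i
      rw [← pow_add]
      congr 1
      omega
    exact Summable.of_nonneg_of_le (fun i => (hfpos _).le)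
      (fun i => hbound (i + N) (by omega)) hsg
  refine ⟨-∑' i, f i, ?_, ?_⟩
  · exact hsum.hasSum.tendsto_sum_nat.neg
  · -- strict inequality
    set g : ℕ → ℝ := fun i => (2 : ℝ) ^ i / 3 ^ (i + 1) with hg
    have hgsum : ∑' i, g i = 1 := by
      have heq : ∀ i, g i = (1/3) * (2/3 : ℝ) ^ i := by
        intro i
        rw [hg]
        simp only [div_pow, pow_succ]
        ring
      rw [tsum_congr heq, tsum_mul_left,
        tsum_geometric_of_lt_one (by norm_num) (by norm_num : (2:ℝ)/3 < 1)]
      norm_num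
    have hgf : ∀ i, g i ≤ f i := by
      intro i
      have h1 : (2:ℝ) ^ i ≤ 2 ^ d i := pow_le_pow_right₀ one_le_two (hd_ge i)
      have h3 : (0:ℝ) < 3 ^ (i+1) := by positivity
      exact div_le_div_of_nonneg_right h1 h3.le |>.trans_eq rfl
    have hex : ∃ j, j < d j := by
      by_contra h
      push_neg at h
      have hall : ∀ j, d j = j := fun j => le_antisymm (h j) (hd_ge j)
      refine hv ⟨1, one_pos, 0, fun n _ => ?_⟩
      have h1 : v n = true := by have := hd_mem n; rwa [hall n] at this
      have h2 : v (n+1) = true := by have := hd_mem (n+1); rwa [hall (n+1)] at this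
      rw [h1, h2]
    obtain ⟨j, hj⟩ := hex
    have hstrict : g j < f j := by
      have h1 : (2:ℝ) ^ j < 2 ^ d j := pow_lt_pow_right₀ one_lt_two hj
      have h3 : (0:ℝ) < 3 ^ (j+1) := by positivity
      exact (div_lt_div_iff_of_pos_right h3).mpr h1
    have hlt : (1:ℝ) < ∑' i, f i := by
      rw [← hgsum]
      exact Summable.tsum_lt_tsum_of_nonneg (fun b => by positivity) hgf hstrict hsum
    linarith
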